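/- arXiv:1509.07674 — 4 statements merged into one kernel-verified Lean document; each statement's English description precedes it below -/
import Mathlib

section
/- For n \geq 6, the 3-cycles of the tournament I_n are exactly the triples \{1,i,n\} for 3 \le i \le n-2 together with the triples \{i,i+1,i+2\} for 1 \le i \le n-2. -/
/-- The pairs of the linear order on `Fin n` whose edges are reversed to form `I_n`. -/
def RevPair (n : ℕ) (i j : Fin n) : Prop :=
  (j.val = i.val + 1) ∨ (i.val = 0 ∧ j.val = n - 1)

/-- The tournament `I_n` on `Fin n` (vertices `0, …, n-1` standing for `1, …, n`). -/
def Irel (n : ℕ) (i j : Fin n) : Prop :=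
  (i.val < j.val ∧ ¬ RevPair n i j) ∨ (j.val < i.val ∧ RevPair n j i)

/-- The set `{a,b,c}` (listed with `a < b < c`) induces a directed 3-cycle. -/
def IsCycleTriple (n : ℕ) (a b c : Fin n) : Prop :=
  (Irel n a b ∧ Irel n b c ∧ Irel n c a) ∨ (Irel n a c ∧ Irel n c b ∧ Irel n b a)

/-- For `n ≥ 6`, the 3-cycles of `I_n` are exactly the triples `{1, i, n}` for
`3 ≤ i ≤ n-2` together with the triples `{i, i+1, i+2}` for `1 ≤ i ≤ n-2`
(here written 0-indexed: `{0, b, n-1}` with `2 ≤ b ≤ n-3`, and `{a, a+1, a+2}`). -/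
theorem stmt10 (n : ℕ) (hn : 6 ≤ n) (a b c : Fin n)
    (hab : a.val < b.val) (hbc : b.val < c.val) :
    IsCycleTriple n a b c ↔
      ((a.val = 0 ∧ c.val = n - 1 ∧ 2 ≤ b.val ∧ b.val ≤ n - 3) ∨
       (b.val = a.val + 1 ∧ c.val = a.val + 2)) := by
  have hc := c.isLt
  simp only [IsCycleTriple, Irel, RevPair, not_or, not_and]
  omega
end

section
/- For n \geq 6, the tournament I_n has exactly 2n - 6 three-cycles. -/
/-- A 3-element subset of vertices inducing a directed 3-cycle in `I_n`. -/
def IsCycleSet (n : ℕ) (s : Finset (Fin n)) : Prop :=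
  ∃ a b c : Fin n, s = {a, b, c} ∧ Irel n a b ∧ Irel n b c ∧ Irel n c a

lemma key1 (m : ℕ) (a b c : Fin (m+6)) (hab : Irel (m+6) a b) (hbc : Irel (m+6) b c)
    (hca : Irel (m+6) c a) (h1 : a.val < b.val) (h2 : a.val < c.val) :
    (a.val = 0 ∧ 2 ≤ b.val ∧ b.val ≤ m+3 ∧ c.val = m+5) ∨
    (b.val = a.val+2 ∧ c.val = a.val+1 ∧ a.val ≤ m+3) := by
  simp only [Irel, RevPair] at hab hbc hca
  have := a.isLt; have := b.isLt; have := c.isLt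
  omega

lemma irel_ne (m : ℕ) (a b : Fin (m+6)) (h : Irel (m+6) a b) : a.val ≠ b.val := by
  rcases h with ⟨h, -⟩ | ⟨h, -⟩ <;> omega

lemma key (m : ℕ) (a b c : Fin (m+6)) (hab : Irel (m+6) a b) (hbc : Irel (m+6) b c)
    (hca : Irel (m+6) c a) :
    (a.val = 0 ∧ 2 ≤ b.val ∧ b.val ≤ m+3 ∧ c.val = m+5) ∨
    (b.val = 0 ∧ 2 ≤ c.val ∧ c.val ≤ m+3 ∧ a.val = m+5) ∨
    (c.val = 0 ∧ 2 ≤ a.val ∧ a.val ≤ m+3 ∧ b.val = m+5) ∨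
    (b.val = a.val+2 ∧ c.val = a.val+1 ∧ a.val ≤ m+3) ∨
    (c.val = b.val+2 ∧ a.val = b.val+1 ∧ b.val ≤ m+3) ∨
    (a.val = c.val+2 ∧ b.val = c.val+1 ∧ c.val ≤ m+3) := by
  have n1 := irel_ne m a b hab
  have n2 := irel_ne m b c hbc
  have n3 := irel_ne m c a hca
  rcases (show (a.val < b.val ∧ a.val < c.val) ∨ (b.val < c.val ∧ b.val < a.val) ∨
      (c.val < a.val ∧ c.val < b.val) by omega) with ⟨u, v⟩ | ⟨u, v⟩ | ⟨u, v⟩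
  · rcases key1 m a b c hab hbc hca u v with h | h
    · exact Or.inl h
    · exact Or.inr (Or.inr (Or.inr (Or.inl h)))
  · rcases key1 m b c a hbc hca hab u v with h | h
    · exact Or.inr (Or.inl h)
    · exact Or.inr (Or.inr (Or.inr (Or.inr (Or.inl h))))
  · rcases key1 m c a b hca hab hbc u v with h | h
    · exact Or.inr (Or.inr (Or.inl h))
    · exact Or.inr (Or.inr (Or.inr (Or.inr (Or.inr h))))

lemma val_add_one (m : ℕ) (k : Fin (m+6)) (h : k.val ≤ m+4) : (k+1).val = k.val + 1 := by
  have h1 : ((1:Fin (m+6))).val = 1 % (m+6) := rfl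
  rw [Fin.val_add, h1, Nat.mod_eq_of_lt (show (1:ℕ) < m+6 by omega),
    Nat.mod_eq_of_lt (by omega)]

lemma val_add_two (m : ℕ) (k : Fin (m+6)) (h : k.val ≤ m+3) : (k+2).val = k.val + 2 := by
  have h1 : ((2:Fin (m+6))).val = 2 % (m+6) := rfl
  rw [Fin.val_add, h1, Nat.mod_eq_of_lt (show (2:ℕ) < m+6 by omega),
    Nat.mod_eq_of_lt (by omega)]

lemma irel_fwd (m : ℕ) (a b : Fin (m+6)) (h : a.val < b.val) (h1 : b.val ≠ a.val + 1)
    (h2 : ¬ (a.val = 0 ∧ b.val = m + 5)) : Irel (m+6) a b := by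
  refine Or.inl ⟨h, ?_⟩
  simp only [RevPair]
  omega

lemma irel_rev (m : ℕ) (a b : Fin (m+6)) (h : b.val < a.val)
    (hr : a.val = b.val + 1 ∨ (b.val = 0 ∧ a.val = m + 5)) : Irel (m+6) a b := by
  refine Or.inr ⟨h, ?_⟩
  simp only [RevPair]
  omega


open Finset in
open Classical in
/-- For `n ≥ 6`, the tournament `I_n` has exactly `2n - 6` three-cycles. -/
theorem stmt11 (n : ℕ) (hn : 6 ≤ n) :
    ((Finset.univ : Finset (Finset (Fin n))).filter
      (fun s => s.card = 3 ∧ IsCycleSet n s)).card = 2 * n - 6 := by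
  obtain ⟨m, rfl⟩ : ∃ m, n = m + 6 := ⟨n - 6, by omega⟩
  set lst : Fin (m+6) := ⟨m+5, by omega⟩ with hlst
  have hlv : lst.val = m + 5 := rfl
  have hv0 : ((0 : Fin (m+6))).val = 0 := rfl
  set A : Finset (Finset (Fin (m+6))) :=
    (Finset.univ.filter fun k : Fin (m+6) => 2 ≤ k.val ∧ k.val ≤ m+3).image
      (fun k => ({0, k, lst} : Finset (Fin (m+6)))) with hA
  set B : Finset (Finset (Fin (m+6))) :=
    (Finset.univ.filter fun k : Fin (m+6) => k.val ≤ m+3).image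
      (fun k => ({k, k+1, k+2} : Finset (Fin (m+6)))) with hB
  have hmemA : ∀ s, s ∈ A ↔ ∃ k : Fin (m+6), (2 ≤ k.val ∧ k.val ≤ m+3) ∧
      ({0, k, lst} : Finset (Fin (m+6))) = s := by
    intro s; simp [hA]
  have hmemB : ∀ s, s ∈ B ↔ ∃ k : Fin (m+6), k.val ≤ m+3 ∧
      ({k, k+1, k+2} : Finset (Fin (m+6))) = s := by
    intro s; simp [hB]
  have hfilter : ((Finset.univ : Finset (Finset (Fin (m+6)))).filter
      (fun s => s.card = 3 ∧ IsCycleSet (m+6) s)) = A ∪ B := by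
    ext s
    simp only [mem_filter, mem_univ, true_and, mem_union]
    constructor
    · rintro ⟨hcard, a, b, c, rfl, hab, hbc, hca⟩
      rcases key m a b c hab hbc hca with h | h | h | h | h | h
      · left; rw [hmemA]
        refine ⟨b, ⟨h.2.1, h.2.2.1⟩, ?_⟩
        have e1 : (0 : Fin (m+6)) = a := Fin.ext (by rw [hv0, h.1])
        have e2 : lst = c := Fin.ext (by rw [hlv, h.2.2.2])
        rw [e1, e2]
      · left; rw [hmemA]
        refine ⟨c, ⟨h.2.1, h.2.2.1⟩, ?_⟩
        have e1 : (0 : Fin (m+6)) = b := Fin.ext (by rw [hv0, h.1])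
        have e2 : lst = a := Fin.ext (by rw [hlv, h.2.2.2])
        rw [e1, e2]
        ext t; simp; tauto
      · left; rw [hmemA]
        refine ⟨a, ⟨h.2.1, h.2.2.1⟩, ?_⟩
        have e1 : (0 : Fin (m+6)) = c := Fin.ext (by rw [hv0, h.1])
        have e2 : lst = b := Fin.ext (by rw [hlv, h.2.2.2])
        rw [e1, e2]
        ext t; simp; tauto
      · right; rw [hmemB]
        refine ⟨a, h.2.2, ?_⟩
        have e1 : a + 1 = c := Fin.ext (by rw [val_add_one m a (by omega)]; omega)
        have e2 : a + 2 = b := Fin.ext (by rw [val_add_two m a (by omega)]; omega)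
        rw [e1, e2]
        ext t; simp; tauto
      · right; rw [hmemB]
        refine ⟨b, h.2.2, ?_⟩
        have e1 : b + 1 = a := Fin.ext (by rw [val_add_one m b (by omega)]; omega)
        have e2 : b + 2 = c := Fin.ext (by rw [val_add_two m b (by omega)]; omega)
        rw [e1, e2]
        ext t; simp; tauto
      · right; rw [hmemB]
        refine ⟨c, h.2.2, ?_⟩
        have e1 : c + 1 = b := Fin.ext (by rw [val_add_one m c (by omega)]; omega)
        have e2 : c + 2 = a := Fin.ext (by rw [val_add_two m c (by omega)]; omega)
        rw [e1, e2]
        ext t; simp; tauto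
    · rintro (hs | hs)
      · rw [hmemA] at hs
        obtain ⟨k, ⟨hk1, hk2⟩, rfl⟩ := hs
        constructor
        · refine Finset.card_eq_three.mpr ⟨0, k, lst, ?_, ?_, ?_, rfl⟩ <;>
            simp only [Ne, Fin.ext_iff, hv0, hlv] <;> omega
        · exact ⟨0, k, lst, rfl,
            irel_fwd m 0 k (by omega) (by omega) (by omega),
            irel_fwd m k lst (by rw [hlv]; omega) (by rw [hlv]; omega) (by omega),
            irel_rev m lst 0 (by rw [hlv, hv0]; omega) (by rw [hlv, hv0]; omega)⟩
      · rw [hmemB] at hs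
        obtain ⟨k, hk, rfl⟩ := hs
        have v1 := val_add_one m k (by omega)
        have v2 := val_add_two m k hk
        constructor
        · refine Finset.card_eq_three.mpr ⟨k, k+1, k+2, ?_, ?_, ?_, rfl⟩ <;>
            simp only [Ne, Fin.ext_iff] <;> omega
        · refine ⟨k, k+2, k+1, by ext t; simp; tauto,
            irel_fwd m k (k+2) (by omega) (by omega) (by omega),
            irel_rev m (k+2) (k+1) (by omega) (by omega),
            irel_rev m (k+1) k (by omega) (by omega)⟩
  have hdisj : Disjoint A B := by
    rw [Finset.disjoint_left]
    rintro s hsA hsB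
    rw [hmemA] at hsA; rw [hmemB] at hsB
    obtain ⟨k, ⟨hk1, hk2⟩, rfl⟩ := hsA
    obtain ⟨k', hk', heq⟩ := hsB
    have v1 := val_add_one m k' (by omega)
    have v2 := val_add_two m k' hk'
    have h0 : (0 : Fin (m+6)) ∈ ({k', k'+1, k'+2} : Finset (Fin (m+6))) := by
      rw [heq]; simp
    have hl : lst ∈ ({k', k'+1, k'+2} : Finset (Fin (m+6))) := by
      rw [heq]; simp
    simp only [mem_insert, mem_singleton, Fin.ext_iff, hv0, hlv] at h0 hl
    omega
  have hinjA : Set.InjOn (fun k : Fin (m+6) => ({0, k, lst} : Finset (Fin (m+6))))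
      ((Finset.univ.filter fun k : Fin (m+6) => 2 ≤ k.val ∧ k.val ≤ m+3) : Finset (Fin (m+6))) := by
    intro k hk k' hk' heq
    simp only [coe_filter, Set.mem_setOf_eq, mem_univ, true_and] at hk hk'
    dsimp only at heq
    have : k ∈ ({0, k', lst} : Finset (Fin (m+6))) := by
      rw [← heq]; simp
    simp only [mem_insert, mem_singleton, Fin.ext_iff, hv0, hlv] at this
    rcases this with h | h | h
    · omega
    · exact Fin.ext h
    · omega
  have hinjB : Set.InjOn (fun k : Fin (m+6) => ({k, k+1, k+2} : Finset (Fin (m+6))))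
      ((Finset.univ.filter fun k : Fin (m+6) => k.val ≤ m+3) : Finset (Fin (m+6))) := by
    intro k hk k' hk' heq
    simp only [coe_filter, Set.mem_setOf_eq, mem_univ, true_and] at hk hk'
    dsimp only at heq
    have u1 := val_add_one m k (by omega); have u2 := val_add_two m k hk
    have w1 := val_add_one m k' (by omega); have w2 := val_add_two m k' hk'
    have h1 : k ∈ ({k', k'+1, k'+2} : Finset (Fin (m+6))) := by rw [← heq]; simp
    have h2 : k' ∈ ({k, k+1, k+2} : Finset (Fin (m+6))) := by rw [heq]; simp
    simp only [mem_insert, mem_singleton, Fin.ext_iff] at h1 h2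
    exact Fin.ext (by omega)
  have cardA : A.card = m + 2 := by
    rw [hA, card_image_of_injOn hinjA]
    have : (Finset.univ.filter fun k : Fin (m+6) => 2 ≤ k.val ∧ k.val ≤ m+3)
        = Finset.Icc (⟨2, by omega⟩ : Fin (m+6)) ⟨m+3, by omega⟩ := by
      ext k; simp [Finset.mem_Icc, Fin.le_def]
    rw [this, Fin.card_Icc]
    simp
  have cardB : B.card = m + 4 := by
    rw [hB, card_image_of_injOn hinjB]
    have : (Finset.univ.filter fun k : Fin (m+6) => k.val ≤ m+3)
        = Finset.Icc (⟨0, by omega⟩ : Fin (m+6)) ⟨m+3, by omega⟩ := by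
      ext k; simp [Finset.mem_Icc, Fin.le_def]
    rw [this, Fin.card_Icc]
    simp
  rw [hfilter, card_union_of_disjoint hdisj, cardA, cardB]
  omega
end

section
/- For n \geq 6 and any vertex i of I_n with 1 < i < n, the vertex i lies in at most 4 three-cycles of I_n. Consequently, at most two vertices of I_n (namely 1 and n) lie in more than five 3-cycles. -/
set_option maxHeartbeats 2000000 in
lemma classify (n : ℕ) (hn : 6 ≤ n) {a b c : Fin n}
    (hab : Irel n a b) (hbc : Irel n b c) (hca : Irel n c a) :
    ∃ x y z : Fin n, ({a, b, c} : Finset (Fin n)) = {x, y, z} ∧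
      ((y.val = x.val + 1 ∧ z.val = x.val + 2) ∨
       (x.val = 0 ∧ 0 < y.val ∧ y.val < n - 1 ∧ z.val = n - 1)) := by
  simp only [Irel, RevPair, not_or, not_and] at hab hbc hca
  have ha := a.isLt; have hb := b.isLt; have hc := c.isLt
  rcases hab with ⟨h1, h2, h3⟩ | ⟨h1, h2 | ⟨h2, h2'⟩⟩ <;>
  rcases hbc with ⟨g1, g2, g3⟩ | ⟨g1, g2 | ⟨g2, g2'⟩⟩ <;>
  rcases hca with ⟨f1, f2, f3⟩ | ⟨f1, f2 | ⟨f2, f2'⟩⟩ <;>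
  first
    | omega
    | exact ⟨a, b, c, rfl, by omega⟩
    | exact ⟨a, c, b, by ext t; simp only [Finset.mem_insert, Finset.mem_singleton]; tauto, by omega⟩
    | exact ⟨b, a, c, by ext t; simp only [Finset.mem_insert, Finset.mem_singleton]; tauto, by omega⟩
    | exact ⟨b, c, a, by ext t; simp only [Finset.mem_insert, Finset.mem_singleton]; tauto, by omega⟩
    | exact ⟨c, a, b, by ext t; simp only [Finset.mem_insert, Finset.mem_singleton]; tauto, by omega⟩
    | exact ⟨c, b, a, by ext t; simp only [Finset.mem_insert, Finset.mem_singleton]; tauto, by omega⟩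

lemma card4 {α : Type*} [DecidableEq α] (a b c d : α) :
    ({a, b, c, d} : Finset α).card ≤ 4 := by
  refine (Finset.card_insert_le _ _).trans (Nat.succ_le_succ ?_)
  refine (Finset.card_insert_le _ _).trans (Nat.succ_le_succ ?_)
  refine (Finset.card_insert_le _ _).trans (Nat.succ_le_succ ?_)
  simp

lemma card2 {α : Type*} [DecidableEq α] (a b : α) :
    ({a, b} : Finset α).card ≤ 2 := by
  refine (Finset.card_insert_le _ _).trans (Nat.succ_le_succ ?_)
  simp

open Classical in
/-- For `n ≥ 6`, every vertex `i` of `I_n` other than the first and last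
(0-indexed: `0 < i < n - 1`) lies in at most 4 three-cycles; consequently at most
two vertices of `I_n` lie in more than five 3-cycles. -/
theorem stmt12 (n : ℕ) (hn : 6 ≤ n) :
    (∀ i : Fin n, 0 < i.val → i.val < n - 1 →
      ((Finset.univ : Finset (Finset (Fin n))).filter
        (fun s => IsCycleSet n s ∧ i ∈ s)).card ≤ 4) ∧
    ((Finset.univ : Finset (Fin n)).filter
      (fun v => 5 < ((Finset.univ : Finset (Finset (Fin n))).filter
        (fun s => IsCycleSet n s ∧ v ∈ s)).card)).card ≤ 2 := by
  have key : ∀ i : Fin n, 0 < i.val → i.val < n - 1 →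
      ((Finset.univ : Finset (Finset (Fin n))).filter
        (fun s => IsCycleSet n s ∧ i ∈ s)).card ≤ 4 := by
    intro i h0 h1
    have hiv := i.isLt
    have hsub : ((Finset.univ : Finset (Finset (Fin n))).filter
        (fun s => IsCycleSet n s ∧ i ∈ s)) ⊆
        ({({⟨i.val - 2, by omega⟩, ⟨i.val - 1, by omega⟩, i} : Finset (Fin n)),
          ({⟨i.val - 1, by omega⟩, i, ⟨i.val + 1, by omega⟩} : Finset (Fin n)),
          ({i, ⟨i.val + 1, by omega⟩, ⟨min (i.val + 2) (n - 1), by omega⟩} : Finset (Fin n)),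
          ({⟨0, by omega⟩, i, ⟨n - 1, by omega⟩} : Finset (Fin n))} :
            Finset (Finset (Fin n))) := by
      intro s hs
      simp only [Finset.mem_filter, Finset.mem_univ, true_and] at hs
      obtain ⟨⟨a, b, c, rfl, hab, hbc, hca⟩, hmem⟩ := hs
      have q1 : i.val + 1 < n := by omega
      have q2 : min (i.val + 2) (n - 1) < n := by omega
      have q3 : i.val - 1 < n := by omega
      have q4 : i.val - 2 < n := by omega
      have q5 : 0 < n := by omega
      have q6 : n - 1 < n := by omega
      obtain ⟨x, y, z, hxyz, hcase⟩ := classify n hn hab hbc hca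
      rw [hxyz] at hmem ⊢
      have hx := x.isLt; have hy := y.isLt; have hz := z.isLt
      simp only [Finset.mem_insert, Finset.mem_singleton] at hmem ⊢
      rcases hcase with ⟨hA1, hA2⟩ | ⟨hB1, hB2, hB3, hB4⟩ <;>
        rcases hmem with h | h | h <;> have hiv' := congrArg Fin.val h
      · -- type A, i = x : s = {i, i+1, i+2}
        have e1 : x = i := h.symm
        have e2 : y = (⟨i.val + 1, q1⟩ : Fin n) := Fin.ext (by simp; omega)
        have e3 : z = (⟨min (i.val + 2) (n - 1), q2⟩ : Fin n) := Fin.ext (by simp; omega)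
        exact Or.inr (Or.inr (Or.inl (by rw [e1, e2, e3])))
      · -- type A, i = y
        have e1 : x = (⟨i.val - 1, q3⟩ : Fin n) := Fin.ext (by simp; omega)
        have e2 : y = i := h.symm
        have e3 : z = (⟨i.val + 1, q1⟩ : Fin n) := Fin.ext (by simp; omega)
        exact Or.inr (Or.inl (by rw [e1, e2, e3]))
      · -- type A, i = z
        have e1 : x = (⟨i.val - 2, q4⟩ : Fin n) := Fin.ext (by simp; omega)
        have e2 : y = (⟨i.val - 1, q3⟩ : Fin n) := Fin.ext (by simp; omega)
        have e3 : z = i := h.symm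
        exact Or.inl (by rw [e1, e2, e3])
      · omega
      · -- type B, i = y
        have e1 : x = (⟨0, q5⟩ : Fin n) := Fin.ext (by simp; omega)
        have e2 : y = i := h.symm
        have e3 : z = (⟨n - 1, q6⟩ : Fin n) := Fin.ext (by simp; omega)
        exact Or.inr (Or.inr (Or.inr (by rw [e1, e2, e3])))
      · omega
    exact (Finset.card_le_card hsub).trans (card4 _ _ _ _)
  refine ⟨key, ?_⟩
  have hsub2 : ((Finset.univ : Finset (Fin n)).filter
      (fun v => 5 < ((Finset.univ : Finset (Finset (Fin n))).filter
        (fun s => IsCycleSet n s ∧ v ∈ s)).card)) ⊆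
      ({⟨0, by omega⟩, ⟨n - 1, by omega⟩} : Finset (Fin n)) := by
    intro v hv
    simp only [Finset.mem_filter, Finset.mem_univ, true_and] at hv
    simp only [Finset.mem_insert, Finset.mem_singleton]
    by_contra hcon
    push_neg at hcon
    have hv0 : v.val ≠ 0 := fun h => hcon.1 (Fin.ext (by simp; omega))
    have hv1 : v.val ≠ n - 1 := fun h => hcon.2 (Fin.ext (by simp; omega))
    have hvlt := v.isLt
    have h0 : 0 < v.val := by omega
    have h1 : v.val < n - 1 := by omega
    have := key v h0 h1
    omega
  exact (Finset.card_le_card hsub2).trans (card2 _ _)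
end

section
/- For distinct m, n \geq 6, the tournament I_m does not embed into the tournament I_n; hence \{I_n : n \ge 6\} is an infinite antichain under embeddability. -/
set_option maxHeartbeats 1000000

def IrelN (N i j : ℕ) : Prop :=
  (i < j ∧ ¬ ((j = i + 1) ∨ (i = 0 ∧ j = N - 1))) ∨
  (j < i ∧ ((i = j + 1) ∨ (j = 0 ∧ i = N - 1)))

lemma irel_iff {N : ℕ} (x y : Fin N) : Irel N x y ↔ IrelN N x.val y.val := Iff.rfl

def Mem3 (u : ℕ) (t : ℕ × ℕ × ℕ) : Prop := u = t.1 ∨ u = t.2.1 ∨ u = t.2.2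

def MS (t : ℕ × ℕ × ℕ) : Multiset ℕ := {t.1, t.2.1, t.2.2}

def Perm3 (s t : ℕ × ℕ × ℕ) : Prop := MS s = MS t

def Shares2 (s t : ℕ × ℕ × ℕ) : Prop :=
  ∃ u v, u ≠ v ∧ Mem3 u s ∧ Mem3 v s ∧ Mem3 u t ∧ Mem3 v t

def Cyc3 (n : ℕ) (t : ℕ × ℕ × ℕ) : Prop :=
  t.1 < n ∧ t.2.1 < n ∧ t.2.2 < n ∧
  IrelN n t.1 t.2.1 ∧ IrelN n t.2.1 t.2.2 ∧ IrelN n t.2.2 t.1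

lemma mem_MS {u : ℕ} {t : ℕ × ℕ × ℕ} : u ∈ MS t ↔ Mem3 u t := by simp [MS, Mem3]

lemma perm3_refl (t : ℕ × ℕ × ℕ) : Perm3 t t := rfl
lemma perm3_symm {s t : ℕ × ℕ × ℕ} (h : Perm3 s t) : Perm3 t s := Eq.symm h
lemma perm3_trans {s t x : ℕ × ℕ × ℕ} (h1 : Perm3 s t) (h2 : Perm3 t x) : Perm3 s x :=
  Eq.trans h1 h2
lemma perm3_mem {s t : ℕ × ℕ × ℕ} {u : ℕ} (hp : Perm3 s t) (hu : Mem3 u s) : Mem3 u t := by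
  rw [← mem_MS] at hu ⊢; unfold Perm3 at hp; rw [← hp]; exact hu

lemma ms_swap12 (x y z : ℕ) : Perm3 (x, y, z) (y, x, z) := Multiset.cons_swap x y {z}
lemma ms_swap23 (x y z : ℕ) : Perm3 (x, y, z) (x, z, y) := congrArg (x ::ₘ ·) (Multiset.pair_comm y z)
lemma ms_rotL (x y z : ℕ) : Perm3 (x, y, z) (y, z, x) := perm3_trans (ms_swap12 x y z) (ms_swap23 y x z)
lemma ms_rotR (x y z : ℕ) : Perm3 (x, y, z) (z, x, y) := perm3_trans (ms_swap23 x y z) (ms_swap12 x z y)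
lemma ms_swap13 (x y z : ℕ) : Perm3 (x, y, z) (z, y, x) := perm3_trans (ms_rotL x y z) (ms_swap12 y z x)

def MapT (G : ℕ → ℕ) (t : ℕ × ℕ × ℕ) : ℕ × ℕ × ℕ := (G t.1, G t.2.1, G t.2.2)

lemma ms_map (G : ℕ → ℕ) (t : ℕ × ℕ × ℕ) : MS (MapT G t) = (MS t).map G := by
  rcases t with ⟨a, b, c⟩; simp [MS, MapT]

lemma perm3_unmap {G : ℕ → ℕ} (hG : Function.Injective G) {s t : ℕ × ℕ × ℕ}
    (h : Perm3 (MapT G s) (MapT G t)) : Perm3 s t := by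
  unfold Perm3 at h ⊢
  rw [ms_map, ms_map] at h
  exact Multiset.map_injective hG h

lemma mem3_map {G : ℕ → ℕ} {u : ℕ} {t : ℕ × ℕ × ℕ} (h : Mem3 u t) :
    Mem3 (G u) (MapT G t) := by
  rcases t with ⟨a, b, c⟩
  simp only [Mem3, MapT] at *
  rcases h with h | h | h <;> subst h <;> tauto

lemma shares2_map {G : ℕ → ℕ} (hG : Function.Injective G) {s t : ℕ × ℕ × ℕ}
    (h : Shares2 s t) : Shares2 (MapT G s) (MapT G t) := by
  obtain ⟨u, v, huv, h1, h2, h3, h4⟩ := h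
  exact ⟨G u, G v, fun e => huv (hG e), mem3_map h1, mem3_map h2, mem3_map h3, mem3_map h4⟩

lemma shares2_symm {s t : ℕ × ℕ × ℕ} (h : Shares2 s t) : Shares2 t s := by
  obtain ⟨u, v, h1, h2, h3, h4, h5⟩ := h
  exact ⟨u, v, h1, h4, h5, h2, h3⟩

/-- classification of directed 3-cycles of `I_n`. -/
lemma classify_s13 {n : ℕ} (hn : 7 ≤ n) {a b c : ℕ} (h : Cyc3 n (a, b, c)) :
    (∃ j, j + 3 ≤ n ∧ Perm3 (a, b, c) (j, j+1, j+2)) ∨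
    (∃ s, 2 ≤ s ∧ s + 3 ≤ n ∧ Perm3 (a, b, c) (0, s, n-1)) := by
  obtain ⟨ha, hb, hc, e1, e2, e3⟩ := h
  simp only at ha hb hc e1 e2 e3
  rcases e1 with ⟨l1, r1⟩ | ⟨l1, r1⟩ <;> rcases e2 with ⟨l2, r2⟩ | ⟨l2, r2⟩ <;>
    rcases e3 with ⟨l3, r3⟩ | ⟨l3, r3⟩
  · omega
  · -- asc asc desc : S with s = b
    rcases r3 with h' | ⟨h1, h2⟩
    · omega
    · subst h1; refine Or.inr ⟨b, by omega, by omega, ?_⟩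
      rw [show c = n - 1 from h2]
      exact perm3_refl _
  · -- asc desc asc : S with s = a, (a, n-1, 0) ~ (0, a, n-1)
    rcases r2 with h' | ⟨h1, h2⟩
    · omega
    · subst h1; refine Or.inr ⟨a, by omega, by omega, ?_⟩
      rw [show b = n - 1 from h2]
      exact ms_rotR a (n-1) 0
  · -- asc desc desc : T with j = a
    rcases r2 with h1 | ⟨h1, h2⟩ <;> rcases r3 with h1' | ⟨h1', h2'⟩
    · refine Or.inl ⟨a, by omega, ?_⟩
      rw [show b = a + 2 by omega, show c = a + 1 by omega]
      exact ms_swap23 a (a+2) (a+1)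
    · omega
    · omega
    · omega
  · -- desc asc asc : S with s = c, (n-1, 0, c) ~ (0, c, n-1)
    rcases r1 with h' | ⟨h1, h2⟩
    · omega
    · subst h1; refine Or.inr ⟨c, by omega, by omega, ?_⟩
      rw [show a = n - 1 from h2]
      exact ms_rotL (n-1) 0 c
  · -- desc asc desc : T with j = b, (b+1, b, b+2)
    rcases r1 with h1 | ⟨h1, h2⟩ <;> rcases r3 with h1' | ⟨h1', h2'⟩
    · refine Or.inl ⟨b, by omega, ?_⟩
      rw [show a = b + 1 from h1, show c = b + 2 by omega]
      exact ms_swap12 (b+1) b (b+2)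
    · omega
    · omega
    · omega
  · -- desc desc asc : T with j = c, (c+2, c+1, c)
    rcases r1 with h1 | ⟨h1, h2⟩ <;> rcases r2 with h1' | ⟨h1', h2'⟩
    · refine Or.inl ⟨c, by omega, ?_⟩
      rw [show a = c + 2 by omega, show b = c + 1 from h1']
      exact ms_swap13 (c+2) (c+1) c
    · omega
    · omega
    · omega
  · omega

def Cn (m i : ℕ) : ℕ × ℕ × ℕ :=
  if i + 3 ≤ m then (i, i+2, i+1) else if i = m - 2 then (0, m-3, m-1) else (0, 2, m-1)

lemma cn_cyc {m : ℕ} (hm : 6 ≤ m) {i : ℕ} (hi : i < m) : Cyc3 m (Cn m i) := by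
  unfold Cn
  split_ifs with h1 h2 <;> (simp [Cyc3, IrelN]; try omega)

lemma cn_adj {m : ℕ} (hm : 6 ≤ m) {i : ℕ} (hi : i + 1 < m) :
    Shares2 (Cn m i) (Cn m (i+1)) := by
  unfold Cn
  by_cases h1 : i + 4 ≤ m
  · rw [if_pos (show i + 3 ≤ m by omega), if_pos (show i + 1 + 3 ≤ m by omega)]
    exact ⟨i+1, i+2, by omega, by simp [Mem3], by simp [Mem3], by simp [Mem3], by simp [Mem3]⟩
  · by_cases h2 : i + 3 ≤ m
    · rw [if_pos h2, if_neg (show ¬ (i + 1 + 3 ≤ m) by omega), if_pos (show i + 1 = m - 2 by omega)]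
      refine ⟨i, i+2, by omega, by simp [Mem3], by simp [Mem3], ?_, ?_⟩
      · simp only [Mem3]; omega
      · simp only [Mem3]; omega
    · by_cases h3 : i = m - 2
      · rw [if_neg (by omega), if_pos h3, if_neg (show ¬ (i + 1 + 3 ≤ m) by omega),
          if_neg (show ¬ (i + 1 = m - 2) by omega)]
        refine ⟨0, m-1, by omega, by simp [Mem3], by simp [Mem3], by simp [Mem3],
          by simp [Mem3]⟩
      · exfalso; omega

lemma cn_wrap {m : ℕ} (hm : 6 ≤ m) : Shares2 (Cn m (m-1)) (Cn m 0) := by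
  unfold Cn
  rw [if_neg (by omega), if_neg (by omega), if_pos (show 0 + 3 ≤ m by omega)]
  exact ⟨0, 2, by omega, by simp [Mem3], by simp [Mem3], by simp [Mem3], by simp [Mem3]⟩

lemma cn_ne {m : ℕ} (hm : 6 ≤ m) {i j : ℕ} (hi : i < m) (hj : j < m) (hij : i ≠ j) :
    ¬ Perm3 (Cn m i) (Cn m j) := by
  intro hp
  unfold Cn at hp
  split_ifs at hp with h1 h2 h3 h4 h5 h6 h7 h8
  · -- T T
    have m1 := perm3_mem hp (Or.inl rfl)
    have m2 := perm3_mem (perm3_symm hp) (Or.inl rfl)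
    simp only [Mem3] at m1 m2; omega
  · -- T S1
    have m1 := perm3_mem (perm3_symm hp) (Or.inl rfl)
    have m2 := perm3_mem (perm3_symm hp) (Or.inr (Or.inr rfl))
    simp only [Mem3] at m1 m2; omega
  · -- T S2
    have m1 := perm3_mem (perm3_symm hp) (Or.inl rfl)
    have m2 := perm3_mem (perm3_symm hp) (Or.inr (Or.inr rfl))
    simp only [Mem3] at m1 m2; omega
  · -- S1 T
    have m1 := perm3_mem hp (Or.inl rfl)
    have m2 := perm3_mem hp (Or.inr (Or.inr rfl))
    simp only [Mem3] at m1 m2; omega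
  · exfalso; omega
  · -- S1 S2
    have m1 := perm3_mem hp (Or.inr (Or.inl rfl))
    simp only [Mem3] at m1; omega
  · -- S2 T
    have m1 := perm3_mem hp (Or.inl rfl)
    have m2 := perm3_mem hp (Or.inr (Or.inr rfl))
    simp only [Mem3] at m1 m2; omega
  · -- S2 S1
    have m1 := perm3_mem (perm3_symm hp) (Or.inr (Or.inl rfl))
    simp only [Mem3] at m1; omega
  · exfalso; omega

lemma natCast_inj_of_lt {m : ℕ} [NeZero m] {a b : ℕ} (ha : a < m) (hb : b < m)
    (h : (a : ZMod m) = b) : a = b := by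
  have := congrArg ZMod.val h
  rwa [ZMod.val_natCast, ZMod.val_natCast, Nat.mod_eq_of_lt ha, Nat.mod_eq_of_lt hb] at this

lemma pos_ne {m : ℕ} [NeZero m] (k : ZMod m) {x y : ℕ} (hxy : x ≤ y)
    (h1 : 0 < y - x) (h2 : y - x < m) : k + (x : ZMod m) ≠ k + (y : ZMod m) := by
  intro he
  have hxy' : (x : ZMod m) = y := add_left_cancel he
  have hmod := (ZMod.natCast_eq_natCast_iff x y m).mp hxy'
  have hd := (Nat.modEq_iff_dvd' hxy).mp hmod
  have := Nat.le_of_dvd h1 hd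
  omega

lemma zmod_add_ne {m : ℕ} [NeZero m] (k : ZMod m) {c : ℕ} (h1 : 0 < c) (h2 : c < m) :
    k ≠ k + (c : ZMod m) := by
  intro he
  have h0 : ((0:ℕ) : ZMod m) = (c : ZMod m) := by
    apply add_left_cancel (a := k); rw [Nat.cast_zero, add_zero]; exact he
  have := natCast_inj_of_lt (show 0 < m by omega) h2 h0
  omega

lemma classify' {n : ℕ} (hn : 7 ≤ n) {t : ℕ × ℕ × ℕ} (h : Cyc3 n t) :
    (∃ j, j + 3 ≤ n ∧ Perm3 t (j, j+1, j+2)) ∨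
    (∃ s, 2 ≤ s ∧ s + 3 ≤ n ∧ Perm3 t (0, s, n-1)) := by
  obtain ⟨a, b, c⟩ := t; exact classify_s13 hn h

lemma cyc3_map {m n : ℕ} {G : ℕ → ℕ} (hGlt : ∀ i, i < m → G i < n)
    (hGrel : ∀ a b, a < m → b < m → IrelN m a b → IrelN n (G a) (G b))
    {t : ℕ × ℕ × ℕ} (h : Cyc3 m t) : Cyc3 n (MapT G t) := by
  obtain ⟨a, b, c⟩ := t
  obtain ⟨h1, h2, h3, h4, h5, h6⟩ := h
  exact ⟨hGlt _ h1, hGlt _ h2, hGlt _ h3, hGrel _ _ h1 h2 h4, hGrel _ _ h2 h3 h5,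
    hGrel _ _ h3 h1 h6⟩

lemma walk {m n : ℕ} [NeZero m] (hm : 6 ≤ m) (hmn : m < n) (hn : 7 ≤ n)
    (D : ZMod m → ℕ × ℕ × ℕ)
    (H2 : ∀ k, Cyc3 n (D k))
    (H3 : ∀ k, Shares2 (D k) (D (k + 1)))
    (H4 : ∀ k l : ZMod m, k ≠ l → ¬ Perm3 (D k) (D l))
    (k0 : ZMod m)
    (h0 : Perm3 (D k0) (0, 1, 2))
    (h1 : Perm3 (D (k0 + 1)) (1, 2, 3))
    (h2 : Perm3 (D (k0 - 1)) (0, 2, n - 1)) : False := by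
  have P : ∀ d, d ≤ n - 3 → Perm3 (D (k0 + ((d:ℕ) : ZMod m))) (d, d+1, d+2) := by
    intro d
    induction d using Nat.strong_induction_on with
    | _ d ih =>
      intro hd
      rcases d with _ | (_ | e)
      · simpa using h0
      · simpa using h1
      · have p0 : Perm3 (D (k0 + ((e:ℕ) : ZMod m))) (e, e+1, e+2) :=
          ih e (by omega) (by omega)
        have p1 : Perm3 (D (k0 + ((e+1:ℕ) : ZMod m))) (e+1, e+1+1, e+1+2) :=
          ih (e+1) (by omega) (by omega)
        have hsh : Shares2 (D (k0 + ((e+1:ℕ) : ZMod m))) (D (k0 + ((e+1+1:ℕ) : ZMod m))) := by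
          have h' := H3 (k0 + ((e+1:ℕ) : ZMod m))
          have hc : (k0 + ((e+1:ℕ) : ZMod m)) + 1 = k0 + ((e+1+1:ℕ) : ZMod m) := by
            push_cast; ring
          rwa [hc] at h'
        obtain ⟨u, v, huv, hu1, hv1, hu2, hv2⟩ := hsh
        have wu1 := perm3_mem p1 hu1
        have wv1 := perm3_mem p1 hv1
        rcases classify' hn (H2 (k0 + ((e+1+1:ℕ) : ZMod m))) with ⟨j1, hj1, hpE⟩ |
          ⟨t1, ht1, ht2, hpE⟩
        · have wu2 := perm3_mem hpE hu2
          have wv2 := perm3_mem hpE hv2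
          have hj : j1 = e ∨ j1 = e + 1 ∨ j1 = e + 1 + 1 := by
            simp only [Mem3] at wu1 wv1 wu2 wv2; omega
          rcases hj with hj | hj | hj
          · rw [hj] at hpE
            exact absurd (perm3_trans hpE (perm3_symm p0))
              (H4 _ _ (Ne.symm (pos_ne k0 (show e ≤ e + 1 + 1 by omega) (by omega) (by omega))))
          · rw [hj] at hpE
            exact absurd (perm3_trans hpE (perm3_symm p1))
              (H4 _ _ (Ne.symm (pos_ne k0 (show e + 1 ≤ e + 1 + 1 by omega) (by omega) (by omega))))
          · rw [hj] at hpE; exact hpE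
        · exfalso
          have wu2 := perm3_mem hpE hu2
          have wv2 := perm3_mem hpE hv2
          simp only [Mem3] at wu1 wv1 wu2 wv2; omega
  by_cases hbig : m ≤ n - 3
  · have pm := P m (by omega)
    rw [ZMod.natCast_self, add_zero] at pm
    have h' := perm3_trans (perm3_symm h0) pm
    have hmem := perm3_mem h' (Or.inl rfl)
    simp only [Mem3] at hmem; omega
  · by_cases hc2 : n = m + 2
    · have pl := P (n-3) (le_refl _)
      have hEq : (k0 + ((n-3 : ℕ) : ZMod m)) + 1 = k0 := by
        have ha : ((n - 3 : ℕ) : ZMod m) + 1 = ((n - 2 : ℕ) : ZMod m) := by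
          rw [show n - 2 = (n - 3) + 1 by omega, Nat.cast_add, Nat.cast_one]
        rw [add_assoc, ha, show n - 2 = m by omega, ZMod.natCast_self, add_zero]
      have hsh := H3 (k0 + ((n-3:ℕ) : ZMod m))
      rw [hEq] at hsh
      obtain ⟨u, v, huv, hu1, hv1, hu2, hv2⟩ := hsh
      have w1 := perm3_mem pl hu1
      have w2 := perm3_mem pl hv1
      have w3 := perm3_mem h0 hu2
      have w4 := perm3_mem h0 hv2
      simp only [Mem3] at w1 w2 w3 w4; omega
    · have hn1 : n = m + 1 := by omega
      have pl := P (n-3) (le_refl _)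
      have pl3 : Perm3 (D (k0 + ((n-4 : ℕ) : ZMod m))) (n-4, (n-4)+1, (n-4)+2) :=
        P (n-4) (by omega)
      have hsh := H3 (k0 + ((n-3:ℕ) : ZMod m))
      have hE : (k0 + ((n-3:ℕ) : ZMod m)) + 1 = k0 + ((n-2:ℕ) : ZMod m) := by
        rw [show n-2 = (n-3)+1 by omega, Nat.cast_add, Nat.cast_one, add_assoc]
      rw [hE] at hsh
      obtain ⟨u, v, huv, hu1, hv1, hu2, hv2⟩ := hsh
      have w1 := perm3_mem pl hu1
      have w2 := perm3_mem pl hv1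
      rcases classify' hn (H2 (k0 + ((n-2:ℕ) : ZMod m))) with ⟨j1, hj1, hpE⟩ |
        ⟨t1, ht1, ht2, hpE⟩
      · have w3 := perm3_mem hpE hu2
        have w4 := perm3_mem hpE hv2
        have hj : j1 = n-4 ∨ j1 = n-3 := by
          simp only [Mem3] at w1 w2 w3 w4; omega
        rcases hj with hj | hj
        · subst hj
          exact absurd (perm3_trans hpE (perm3_symm pl3))
            (H4 _ _ (Ne.symm (pos_ne k0 (show n-4 ≤ n-2 by omega) (by omega) (by omega))))
        · subst hj
          exact absurd (perm3_trans hpE (perm3_symm pl))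
            (H4 _ _ (Ne.symm (pos_ne k0 (show n-3 ≤ n-2 by omega) (by omega) (by omega))))
      · have w3 := perm3_mem hpE hu2
        have w4 := perm3_mem hpE hv2
        have hT : t1 = n - 3 := by
          simp only [Mem3] at w1 w2 w3 w4; omega
        subst hT
        have hpos : k0 + ((n-2:ℕ) : ZMod m) = k0 - 1 := by
          have hz : ((n-2:ℕ) : ZMod m) + 1 = 0 := by
            rw [show ((n-2:ℕ) : ZMod m) + 1 = ((n-1 : ℕ) : ZMod m) from by
              rw [show n-1 = (n-2)+1 by omega, Nat.cast_add, Nat.cast_one],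
              show n-1 = m by omega, ZMod.natCast_self]
          have hneg : ((n-2:ℕ) : ZMod m) = -1 := eq_neg_of_add_eq_zero_left hz
          rw [hneg, sub_eq_add_neg]
        rw [hpos] at hpE
        have hfin := perm3_trans (perm3_symm hpE) h2
        have hmem := perm3_mem hfin (Or.inr (Or.inl rfl))
        simp only [Mem3] at hmem; omega

lemma down {m n : ℕ} [NeZero m] (hm : 6 ≤ m) (hn : 7 ≤ n)
    (D : ZMod m → ℕ × ℕ × ℕ)
    (H2 : ∀ k, Cyc3 n (D k))
    (H3 : ∀ k, Shares2 (D k) (D (k + 1)))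
    (H4 : ∀ k l : ZMod m, k ≠ l → ¬ Perm3 (D k) (D l)) :
    ∀ j, ∀ k : ZMod m, j + 3 ≤ n → Perm3 (D k) (j, j+1, j+2) →
      ∃ k', Perm3 (D k') (0, 1, 2) := by
  intro j
  induction j using Nat.strong_induction_on with
  | _ j ih =>
    intro k hj hp
    rcases Nat.eq_zero_or_pos j with h0 | hjpos
    · subst h0; exact ⟨k, by simpa using hp⟩
    · have hone : (0:ℕ) < 1 := one_pos
      have hne_plus : k ≠ k + 1 := by
        have := zmod_add_ne (m := m) k (c := 1) (by omega) (by omega)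
        simpa using this
      have hne_minus : k ≠ k - 1 := by
        intro he
        have : k - 1 ≠ (k - 1) + 1 := by
          have := zmod_add_ne (m := m) (k-1) (c := 1) (by omega) (by omega)
          simpa using this
        rw [sub_add_cancel] at this
        exact this he.symm
      have hne_pm : k + 1 ≠ k - 1 := by
        intro heq
        have h2' : k - 1 ≠ (k - 1) + ((2:ℕ) : ZMod m) :=
          zmod_add_ne (m := m) (k-1) (by omega) (by omega)
        apply h2'
        push_cast
        linear_combination -heq
      have hsR := H3 k
      have hsL : Shares2 (D k) (D (k - 1)) := by
        have h' := H3 (k - 1)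
        rw [sub_add_cancel] at h'
        exact shares2_symm h'
      have nb : ∀ k' : ZMod m, Shares2 (D k) (D k') → ¬ Perm3 (D k) (D k') →
          Perm3 (D k') (j-1, (j-1)+1, (j-1)+2) ∨
          (j + 4 ≤ n ∧ Perm3 (D k') (j+1, (j+1)+1, (j+1)+2)) ∨
          (j = n - 3 ∧ Perm3 (D k') (0, n-3, n-1)) := by
        intro k' hs hnp
        obtain ⟨u, v, huv, hu1, hv1, hu2, hv2⟩ := hs
        have wu1 := perm3_mem hp hu1
        have wv1 := perm3_mem hp hv1
        rcases classify' hn (H2 k') with ⟨j1, hj1, hpE⟩ | ⟨t1, ht1, ht2, hpE⟩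
        · have wu2 := perm3_mem hpE hu2
          have wv2 := perm3_mem hpE hv2
          have hj1' : j1 = j - 1 ∨ j1 = j ∨ j1 = j + 1 := by
            simp only [Mem3] at wu1 wv1 wu2 wv2; omega
          rcases hj1' with h | h | h
          · subst h; exact Or.inl hpE
          · subst h; exact absurd (perm3_symm (perm3_trans hpE (perm3_symm hp))) hnp
          · subst h; exact Or.inr (Or.inl ⟨by omega, hpE⟩)
        · have wu2 := perm3_mem hpE hu2
          have wv2 := perm3_mem hpE hv2
          have ht : t1 = n - 3 ∧ j = n - 3 := by
            simp only [Mem3] at wu1 wv1 wu2 wv2; omega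
          obtain ⟨ht1', hj'⟩ := ht
          subst ht1'
          exact Or.inr (Or.inr ⟨hj', hpE⟩)
      have nbR := nb (k+1) hsR (H4 _ _ hne_plus)
      have nbL := nb (k-1) hsL (H4 _ _ hne_minus)
      rcases nbR with hR | hR
      · exact ih (j-1) (by omega) (k+1) (by omega) hR
      rcases nbL with hL | hL
      · exact ih (j-1) (by omega) (k-1) (by omega) hL
      rcases hR with ⟨hR1, hR2⟩ | ⟨hR1, hR2⟩ <;> rcases hL with ⟨hL1, hL2⟩ | ⟨hL1, hL2⟩
      · exact absurd (perm3_trans hR2 (perm3_symm hL2)) (H4 _ _ hne_pm)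
      · omega
      · omega
      · exact absurd (perm3_trans hR2 (perm3_symm hL2)) (H4 _ _ hne_pm)

/-- For distinct `m, n ≥ 6`, the tournament `I_m` does not embed into `I_n`
(embeddings of tournaments are injective maps preserving the edge relation);
hence `{I_n : n ≥ 6}` is an infinite antichain under embeddability. -/
theorem stmt13 (m n : ℕ) (hm : 6 ≤ m) (hn : 6 ≤ n) (hmn : m ≠ n) :
    ¬ ∃ f : Fin m → Fin n, Function.Injective f ∧
      ∀ x y, Irel m x y → Irel n (f x) (f y) := by
  rintro ⟨f, hinj, hrel⟩
  have hle : m ≤ n := by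
    have := Fintype.card_le_of_injective f hinj
    simpa using this
  have hlt : m < n := lt_of_le_of_ne hle hmn
  have hn7 : 7 ≤ n := by omega
  haveI : NeZero m := ⟨by omega⟩
  set G : ℕ → ℕ := fun i => if h : i < m then (f ⟨i, h⟩).val else n + i with hG
  have hGlt : ∀ i, i < m → G i < n := by
    intro i h
    simp only [hG, dif_pos h]
    exact (f ⟨i, h⟩).isLt
  have hGinj : Function.Injective G := by
    intro a b hab
    by_cases ha : a < m <;> by_cases hb : b < m
    · simp only [hG, dif_pos ha, dif_pos hb] at hab
      have : (⟨a, ha⟩ : Fin m) = ⟨b, hb⟩ := hinj (Fin.val_injective hab)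
      simpa using this
    · simp only [hG, dif_pos ha, dif_neg hb] at hab
      have := (f ⟨a, ha⟩).isLt
      omega
    · simp only [hG, dif_neg ha, dif_pos hb] at hab
      have := (f ⟨b, hb⟩).isLt
      omega
    · simp only [hG, dif_neg ha, dif_neg hb] at hab
      omega
  have hGrel : ∀ a b, a < m → b < m → IrelN m a b → IrelN n (G a) (G b) := by
    intro a b ha hb h
    have h' := hrel ⟨a, ha⟩ ⟨b, hb⟩ ((irel_iff _ _).mpr h)
    simp only [hG, dif_pos ha, dif_pos hb]
    exact (irel_iff _ _).mp h'
  set D : ZMod m → ℕ × ℕ × ℕ := fun k => MapT G (Cn m k.val) with hD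
  have hval : ∀ k : ZMod m, k.val < m := fun k => ZMod.val_lt k
  have H2 : ∀ k, Cyc3 n (D k) := fun k =>
    cyc3_map hGlt hGrel (cn_cyc (by omega) (hval k))
  have H3 : ∀ k, Shares2 (D k) (D (k + 1)) := by
    intro k
    apply shares2_map hGinj
    have hv : (k + 1).val = (k.val + 1) % m := by
      rw [ZMod.val_add]
      congr 1
      rw [show (1 : ZMod m) = ((1:ℕ) : ZMod m) by norm_cast, ZMod.val_natCast,
        Nat.mod_eq_of_lt (by omega)]
    by_cases hk : k.val + 1 < m
    · rw [hv, Nat.mod_eq_of_lt hk]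
      exact cn_adj (by omega) hk
    · have hkv : k.val = m - 1 := by have := hval k; omega
      rw [hv, hkv, show (m - 1 + 1) % m = 0 by
        rw [Nat.sub_add_cancel (by omega)]; exact Nat.mod_self m]
      exact cn_wrap (by omega)
  have H4 : ∀ k l : ZMod m, k ≠ l → ¬ Perm3 (D k) (D l) := by
    intro k l hkl hp
    exact cn_ne (by omega) (hval k) (hval l)
      (fun h => hkl (ZMod.val_injective _ h)) (perm3_unmap hGinj hp)
  -- find a T-triangle somewhere
  have hT : ∃ (k : ZMod m) (j : ℕ), j + 3 ≤ n ∧ Perm3 (D k) (j, j+1, j+2) := by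
    rcases classify' hn7 (H2 0) with ⟨j, hj, hp0⟩ | ⟨s, hs1, hs2, hp0⟩
    · exact ⟨0, j, hj, hp0⟩
    rcases classify' hn7 (H2 ((3:ℕ) : ZMod m)) with ⟨j, hj, hp3⟩ | ⟨s', hs1', hs2', hp3⟩
    · exact ⟨_, j, hj, hp3⟩
    exfalso
    have hv0 : (0 : ZMod m).val = 0 := ZMod.val_zero
    have hv3 : ((3:ℕ) : ZMod m).val = 3 := by
      rw [ZMod.val_natCast, Nat.mod_eq_of_lt (by omega)]
    have hc0 : Cn m 0 = (0, 2, 1) := by unfold Cn; rw [if_pos (by omega)]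
    have hc3 : Cn m 3 = (3, 5, 4) := by unfold Cn; rw [if_pos (by omega)]
    have m0 : Mem3 0 (D 0) := perm3_mem (perm3_symm hp0) (Or.inl rfl)
    have m3 : Mem3 0 (D ((3:ℕ) : ZMod m)) := perm3_mem (perm3_symm hp3) (Or.inl rfl)
    simp only [hD] at m0 m3
    rw [hv0, hc0] at m0
    rw [hv3, hc3] at m3
    simp only [MapT, Mem3] at m0 m3
    rcases m0 with h | h | h <;> rcases m3 with h' | h' | h' <;>
      · have := hGinj (h.symm.trans h')
        omega
  obtain ⟨k1, j1, hj1, hpT⟩ := hT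
  obtain ⟨k2, hk2⟩ := down (by omega) hn7 D H2 H3 H4 j1 k1 hj1 hpT
  -- neighbors of the T_0 triangle
  have hne_plus : k2 ≠ k2 + 1 := by
    have := zmod_add_ne (m := m) k2 (c := 1) (by omega) (by omega)
    simpa using this
  have hne_minus : k2 ≠ k2 - 1 := by
    intro he
    have h' : k2 - 1 ≠ (k2 - 1) + 1 := by
      have := zmod_add_ne (m := m) (k2-1) (c := 1) (by omega) (by omega)
      simpa using this
    rw [sub_add_cancel] at h'
    exact h' he.symm
  have hne_pm : k2 + 1 ≠ k2 - 1 := by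
    intro heq
    have h2' : k2 - 1 ≠ (k2 - 1) + ((2:ℕ) : ZMod m) :=
      zmod_add_ne (m := m) (k2-1) (by omega) (by omega)
    apply h2'
    push_cast
    linear_combination -heq
  have hsR := H3 k2
  have hsL : Shares2 (D k2) (D (k2 - 1)) := by
    have h' := H3 (k2 - 1)
    rw [sub_add_cancel] at h'
    exact shares2_symm h'
  have nb0 : ∀ k' : ZMod m, Shares2 (D k2) (D k') → ¬ Perm3 (D k2) (D k') →
      Perm3 (D k') (1, 2, 3) ∨ Perm3 (D k') (0, 2, n-1) := by
    intro k' hs hnp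
    obtain ⟨u, v, huv, hu1, hv1, hu2, hv2⟩ := hs
    have wu1 := perm3_mem hk2 hu1
    have wv1 := perm3_mem hk2 hv1
    rcases classify' hn7 (H2 k') with ⟨j', hj', hpE⟩ | ⟨t', ht1, ht2, hpE⟩
    · have wu2 := perm3_mem hpE hu2
      have wv2 := perm3_mem hpE hv2
      have hj'' : j' = 0 ∨ j' = 1 := by
        simp only [Mem3] at wu1 wv1 wu2 wv2; omega
      rcases hj'' with h | h
      · rw [h] at hpE
        exact absurd (perm3_symm (perm3_trans hpE (perm3_symm hk2))) hnp
      · rw [h] at hpE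
        left
        exact hpE
    · have wu2 := perm3_mem hpE hu2
      have wv2 := perm3_mem hpE hv2
      have ht' : t' = 2 := by
        simp only [Mem3] at wu1 wv1 wu2 wv2; omega
      rw [ht'] at hpE
      right
      exact hpE
  rcases nb0 (k2+1) hsR (H4 _ _ hne_plus) with hR | hR <;>
    rcases nb0 (k2-1) hsL (H4 _ _ hne_minus) with hL | hL
  · exact absurd (perm3_trans hR (perm3_symm hL)) (H4 _ _ hne_pm)
  · -- forward walk
    exact walk (by omega) hlt hn7 D H2 H3 H4 k2 hk2 hR hL
  · -- backward walk
    refine walk (by omega) hlt hn7 (fun x => D (k2 - x)) (fun k => H2 _) ?_ ?_ 0 ?_ ?_ ?_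
    · intro k
      have h' := H3 (k2 - k - 1)
      rw [show (k2 - k - 1) + 1 = k2 - k by ring] at h'
      have := shares2_symm h'
      simpa [sub_sub] using this
    · intro k l hkl hp
      exact H4 _ _ (fun h => hkl (by
        have := sub_right_injective h
        exact this)) hp
    · simpa using hk2
    · simpa using hL
    · simpa using hR
  · exact absurd (perm3_trans hR (perm3_symm hL)) (H4 _ _ hne_pm)
end
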